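/- arXiv:2106.09633 — 2 statements merged into one kernel-verified Lean document; each statement's English description precedes it below -/
import Mathlib

section
/- Let X ⊆ ℝ^s be compact, f : X → ℝ^p continuous, M_0 a p×p positive definite symmetric real matrix, a ∈ (0,1), and c ∈ ℝ^p. For a Borel probability measure ξ on X let M(ξ) = ∫_X f(x) f(x)ᵀ dξ(x) and R(ξ) = a·M(ξ) + (1−a)·M_0. Then a Borel probability measure ξ* minimizes cᵀ R(ξ)⁻¹ c over all Borel probability measures on X if and only if for every x ∈ X, ( f(x)ᵀ R(ξ*)⁻¹ c )² ≤ cᵀ R(ξ*)⁻¹ M(ξ*) R(ξ*)⁻¹ c. -/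
open Matrix MeasureTheory

/-- Information matrix `M(ξ) = ∫ f(x) f(x)ᵀ dξ(x)` of a design `ξ` on `X`. -/
noncomputable def infoM {s p : ℕ} {X : Set (Fin s → ℝ)} (f : X → Fin p → ℝ)
    (ξ : Measure X) : Matrix (Fin p) (Fin p) ℝ :=
  Matrix.of fun i j => ∫ x, f x i * f x j ∂ξ

/-- Augmented information matrix `R(ξ) = a M(ξ) + (1 − a) M₀`. -/
noncomputable def augM {s p : ℕ} {X : Set (Fin s → ℝ)} (f : X → Fin p → ℝ)
    (M0 : Matrix (Fin p) (Fin p) ℝ) (a : ℝ) (ξ : Measure X) :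
    Matrix (Fin p) (Fin p) ℝ :=
  a • infoM f ξ + (1 - a) • M0


open scoped Topology


section Aux
variable {p : ℕ}

/-- symmetry of quadratic-ish forms for entrywise-symmetric matrices -/
lemma dot_symm (N : Matrix (Fin p) (Fin p) ℝ) (hsymm : ∀ i j, N i j = N j i)
    (v w : Fin p → ℝ) : v ⬝ᵥ N *ᵥ w = w ⬝ᵥ N *ᵥ v := by
  simp only [dotProduct, mulVec, Finset.mul_sum]
  rw [Finset.sum_comm]
  exact Finset.sum_congr rfl fun j _ => Finset.sum_congr rfl fun i _ => by
    rw [hsymm i j]; ring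

lemma herm_entry {N : Matrix (Fin p) (Fin p) ℝ} (hN : N.IsHermitian) (i j : Fin p) :
    N i j = N j i := by
  conv_lhs => rw [← hN]
  simp [conjTranspose_apply]

lemma posSemidef_smul {M : Matrix (Fin p) (Fin p) ℝ} (hM : M.PosSemidef)
    {r : ℝ} (hr : 0 ≤ r) : (r • M).PosSemidef := by
  refine Matrix.PosSemidef.of_dotProduct_mulVec_nonneg ?_ fun v => ?_
  · unfold Matrix.IsHermitian
    rw [conjTranspose_smul, hM.1]
    simp
  · rw [smul_mulVec, dotProduct_smul, smul_eq_mul]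
    exact mul_nonneg hr (by simpa using hM.dotProduct_mulVec_nonneg v)

lemma posDef_smul {M : Matrix (Fin p) (Fin p) ℝ} (hM : M.PosDef)
    {r : ℝ} (hr : 0 < r) : (r • M).PosDef := by
  refine Matrix.PosDef.of_dotProduct_mulVec_pos ?_ fun v hv => ?_
  · unfold Matrix.IsHermitian
    rw [conjTranspose_smul, hM.1]
    simp
  · rw [smul_mulVec, dotProduct_smul, smul_eq_mul]
    exact mul_pos hr (by simpa using hM.dotProduct_mulVec_pos hv)

/-- key convexity inequality -/
lemma convex_ineq {A B : Matrix (Fin p) (Fin p) ℝ} (hA : A.PosDef) (hB : B.PosDef)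
    (c : Fin p → ℝ) :
    c ⬝ᵥ B⁻¹ *ᵥ c ≤ c ⬝ᵥ A⁻¹ *ᵥ c + c ⬝ᵥ (B⁻¹ * (A - B) * B⁻¹) *ᵥ c := by
  have hAd : IsUnit A.det := hA.det_pos.ne'.isUnit
  have hBd : IsUnit B.det := hB.det_pos.ne'.isUnit
  set u := A⁻¹ *ᵥ c with hu
  set v := B⁻¹ *ᵥ c with hv
  have hAu : A *ᵥ u = c := by
    rw [hu, mulVec_mulVec, Matrix.mul_nonsing_inv _ hAd, one_mulVec]
  have hBv : B *ᵥ v = c := by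
    rw [hv, mulVec_mulVec, Matrix.mul_nonsing_inv _ hBd, one_mulVec]
  have hAsym : ∀ i j, A i j = A j i := herm_entry hA.1
  have hBisym : ∀ i j, B⁻¹ i j = B⁻¹ j i := herm_entry hB.1.inv
  have t1 : c ⬝ᵥ A⁻¹ *ᵥ c = u ⬝ᵥ A *ᵥ u := by
    rw [← hu]
    nth_rewrite 1 [← hAu]
    rw [dotProduct_comm]
  have t2 : c ⬝ᵥ B⁻¹ *ᵥ c = u ⬝ᵥ A *ᵥ v := by
    rw [← hv]
    nth_rewrite 1 [← hAu]
    rw [dotProduct_comm, dot_symm A hAsym]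
  have t3 : c ⬝ᵥ (B⁻¹ * (A - B) * B⁻¹) *ᵥ c
      = v ⬝ᵥ A *ᵥ v - u ⬝ᵥ A *ᵥ v := by
    rw [← mulVec_mulVec, ← mulVec_mulVec, dot_symm B⁻¹ hBisym, ← hv,
      dotProduct_comm, sub_mulVec, dotProduct_sub, hBv]
    congr 1
    rw [← hAu, dot_symm A hAsym]
  rw [t1, t2, t3]
  have hq : (0:ℝ) ≤ (u - v) ⬝ᵥ A *ᵥ (u - v) := by simpa using hA.posSemidef.dotProduct_mulVec_nonneg (u - v)
  have hexp : (u - v) ⬝ᵥ A *ᵥ (u - v)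
      = u ⬝ᵥ A *ᵥ u - 2 * (u ⬝ᵥ A *ᵥ v) + v ⬝ᵥ A *ᵥ v := by
    rw [mulVec_sub, dotProduct_sub, sub_dotProduct, sub_dotProduct]
    have : v ⬝ᵥ A *ᵥ u = u ⬝ᵥ A *ᵥ v := dot_symm A hAsym v u
    rw [this]; ring
  nlinarith [hq, hexp]

end Aux

section Aux2
variable {s p : ℕ} {X : Set (Fin s → ℝ)} (f : X → Fin p → ℝ)

lemma integrable_entry (hf : Continuous f) (hX : IsCompact X)
    (ξ : Measure X) [IsFiniteMeasure ξ] (i j : Fin p) :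
    Integrable (fun x => f x i * f x j) ξ := by
  have : CompactSpace X := isCompact_iff_compactSpace.mp hX
  have hc : Continuous fun x : X => f x i * f x j :=
    ((continuous_apply i).comp hf).mul ((continuous_apply j).comp hf)
  exact hc.integrable_of_hasCompactSupport (isClosed_tsupport _).isCompact

lemma integrable_dot_sq (hf : Continuous f) (hX : IsCompact X)
    (ξ : Measure X) [IsFiniteMeasure ξ] (u : Fin p → ℝ) :
    Integrable (fun x => (f x ⬝ᵥ u) ^ 2) ξ := by
  have : CompactSpace X := isCompact_iff_compactSpace.mp hX
  have hd : Continuous fun x : X => f x ⬝ᵥ u :=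
    continuous_finset_sum _ fun i _ =>
      ((continuous_apply i).comp hf).mul continuous_const
  exact ((hd.pow 2).integrable_of_hasCompactSupport (isClosed_tsupport _).isCompact)

lemma dot_infoM (hf : Continuous f) (hX : IsCompact X)
    (ξ : Measure X) [IsFiniteMeasure ξ] (v w : Fin p → ℝ) :
    v ⬝ᵥ (infoM f ξ) *ᵥ w = ∫ x, (f x ⬝ᵥ v) * (f x ⬝ᵥ w) ∂ξ := by
  have hint : ∀ i j : Fin p, Integrable (fun x => v i * w j * (f x i * f x j)) ξ :=
    fun i j => (integrable_entry f hf hX ξ i j).const_mul _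
  have key : ∀ x : X, (f x ⬝ᵥ v) * (f x ⬝ᵥ w)
      = ∑ i, ∑ j, v i * w j * (f x i * f x j) := by
    intro x
    simp only [dotProduct, Finset.sum_mul_sum]
    exact Finset.sum_congr rfl fun i _ => Finset.sum_congr rfl fun j _ => by ring
  rw [show (∫ x, (f x ⬝ᵥ v) * (f x ⬝ᵥ w) ∂ξ)
      = ∫ x, ∑ i, ∑ j, v i * w j * (f x i * f x j) ∂ξ from by
    exact integral_congr_ae (Filter.Eventually.of_forall key)]
  rw [integral_finset_sum _ fun i _ => integrable_finset_sum _ fun j _ => hint i j]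
  simp only [dotProduct, mulVec, infoM, Matrix.of_apply]
  refine Finset.sum_congr rfl fun i _ => ?_
  rw [integral_finset_sum _ fun j _ => hint i j, Finset.mul_sum]
  refine Finset.sum_congr rfl fun j _ => ?_
  rw [integral_const_mul]
  ring

lemma infoM_posSemidef (hf : Continuous f) (hX : IsCompact X)
    (ξ : Measure X) [IsFiniteMeasure ξ] : (infoM f ξ).PosSemidef := by
  refine Matrix.PosSemidef.of_dotProduct_mulVec_nonneg ?_ fun v => ?_
  · ext i j
    simp only [infoM, conjTranspose_apply, Matrix.of_apply, star_trivial]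
    simp_rw [mul_comm]
  · have := dot_infoM f hf hX ξ v v
    simp only [star_trivial]
    rw [this]
    exact integral_nonneg fun x => mul_self_nonneg _

lemma augM_posDef (hf : Continuous f) (hX : IsCompact X)
    (M0 : Matrix (Fin p) (Fin p) ℝ) (hM0 : M0.PosDef) {a : ℝ}
    (ha : a ∈ Set.Ioo (0:ℝ) 1) (ξ : Measure X) [IsFiniteMeasure ξ] :
    (augM f M0 a ξ).PosDef := by
  have h1 : (a • infoM f ξ).PosSemidef :=
    posSemidef_smul (infoM_posSemidef f hf hX ξ) ha.1.le
  have h2 : ((1 - a) • M0).PosDef := posDef_smul hM0 (by linarith [ha.2])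
  exact Matrix.PosDef.posSemidef_add h1 h2

end Aux2

section Aux3
variable {p : ℕ}

lemma dot_conj {N M : Matrix (Fin p) (Fin p) ℝ} (hN : ∀ i j, N i j = N j i)
    (c : Fin p → ℝ) :
    c ⬝ᵥ (N * M * N) *ᵥ c = (N *ᵥ c) ⬝ᵥ M *ᵥ (N *ᵥ c) := by
  rw [← mulVec_mulVec, ← mulVec_mulVec, dot_symm N hN, dotProduct_comm]

lemma vecmul_self_mulVec (w u : Fin p → ℝ) :
    (Matrix.of fun i j => w i * w j) *ᵥ u = (w ⬝ᵥ u) • w := by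
  ext i
  simp only [mulVec, dotProduct, Matrix.of_apply, Pi.smul_apply, smul_eq_mul]
  rw [Finset.sum_mul]
  exact Finset.sum_congr rfl fun j _ => by ring

lemma dot_conj_vecmul {N : Matrix (Fin p) (Fin p) ℝ} (hN : ∀ i j, N i j = N j i)
    (w c : Fin p → ℝ) :
    c ⬝ᵥ (N * Matrix.of (fun i j => w i * w j) * N) *ᵥ c = (w ⬝ᵥ N *ᵥ c) ^ 2 := by
  rw [dot_conj hN, vecmul_self_mulVec, dotProduct_smul, smul_eq_mul,
    dotProduct_comm, pow_two]

end Aux3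

section Aux4
variable {s p : ℕ} {X : Set (Fin s → ℝ)} (f : X → Fin p → ℝ)

lemma dot_conj_infoM (hf : Continuous f) (hX : IsCompact X)
    (ξ : Measure X) [IsFiniteMeasure ξ] {N : Matrix (Fin p) (Fin p) ℝ}
    (hN : ∀ i j, N i j = N j i) (c : Fin p → ℝ) :
    c ⬝ᵥ (N * infoM f ξ * N) *ᵥ c = ∫ x, (f x ⬝ᵥ N *ᵥ c) ^ 2 ∂ξ := by
  rw [dot_conj hN, dot_infoM f hf hX]
  exact integral_congr_ae (Filter.Eventually.of_forall fun x => (pow_two _).symm)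

lemma infoM_mix (hf : Continuous f) (hX : IsCompact X)
    (ξs : Measure X) [IsProbabilityMeasure ξs] (x : X) {t : ℝ} (ht0 : 0 ≤ t)
    (ht1 : t ≤ 1) :
    infoM f (ENNReal.ofReal (1 - t) • ξs + ENNReal.ofReal t • Measure.dirac x)
      = (1 - t) • infoM f ξs + t • Matrix.of (fun i j => f x i * f x j) := by
  have : CompactSpace X := isCompact_iff_compactSpace.mp hX
  ext i j
  have hg : StronglyMeasurable fun y : X => f y i * f y j :=
    (((continuous_apply i).comp hf).mul ((continuous_apply j).comp hf)).stronglyMeasurable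
  have h1 : Integrable (fun y : X => f y i * f y j) (ENNReal.ofReal (1 - t) • ξs) :=
    (integrable_entry f hf hX ξs i j).smul_measure ENNReal.ofReal_ne_top
  have h2 : Integrable (fun y : X => f y i * f y j)
      (ENNReal.ofReal t • Measure.dirac x) :=
    (integrable_entry f hf hX (Measure.dirac x) i j).smul_measure ENNReal.ofReal_ne_top
  simp only [infoM, Matrix.of_apply, Matrix.add_apply, Matrix.smul_apply, smul_eq_mul]
  rw [integral_add_measure h1 h2, integral_smul_measure, integral_smul_measure,
    integral_dirac' _ x hg, ENNReal.toReal_ofReal (by linarith), ENNReal.toReal_ofReal ht0]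
  simp [smul_eq_mul]

lemma augM_mix (hf : Continuous f) (hX : IsCompact X)
    (M0 : Matrix (Fin p) (Fin p) ℝ) (a : ℝ)
    (ξs : Measure X) [IsProbabilityMeasure ξs] (x : X) {t : ℝ} (ht0 : 0 ≤ t)
    (ht1 : t ≤ 1) :
    augM f M0 a (ENNReal.ofReal (1 - t) • ξs + ENNReal.ofReal t • Measure.dirac x)
      = augM f M0 a ξs
        + (t * a) • (Matrix.of (fun i j => f x i * f x j) - infoM f ξs) := by
  unfold augM
  rw [infoM_mix f hf hX ξs x ht0 ht1]
  ext i j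
  simp only [Matrix.add_apply, Matrix.smul_apply, Matrix.sub_apply, Matrix.of_apply,
    smul_eq_mul]
  ring

lemma isProb_mix {t : ℝ} (ht0 : 0 ≤ t) (ht1 : t ≤ 1)
    (ξs : Measure X) [IsProbabilityMeasure ξs] (x : X) :
    IsProbabilityMeasure
      (ENNReal.ofReal (1 - t) • ξs + ENNReal.ofReal t • Measure.dirac x) := by
  constructor
  rw [Measure.add_apply, Measure.smul_apply, Measure.smul_apply, measure_univ,
    measure_univ, smul_eq_mul, smul_eq_mul, mul_one, mul_one,
    ← ENNReal.ofReal_add (by linarith) ht0, sub_add_cancel, ENNReal.ofReal_one]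

end Aux4

/-- c-criterion case of the general equivalence theorem for augmented designs:
`ξ*` minimizes `cᵀ R(ξ)⁻¹ c` over all designs iff
`(f(x)ᵀ R(ξ*)⁻¹ c)² ≤ cᵀ R(ξ*)⁻¹ M(ξ*) R(ξ*)⁻¹ c` for every `x ∈ X`. -/
theorem stmt10 {s p : ℕ} (X : Set (Fin s → ℝ)) (hX : IsCompact X)
    (f : X → Fin p → ℝ) (hf : Continuous f)
    (M0 : Matrix (Fin p) (Fin p) ℝ) (hM0 : M0.PosDef)
    (a : ℝ) (ha : a ∈ Set.Ioo (0 : ℝ) 1) (c : Fin p → ℝ)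
    (ξs : Measure X) [IsProbabilityMeasure ξs] :
    (∀ ξ : Measure X, IsProbabilityMeasure ξ →
        c ⬝ᵥ (augM f M0 a ξs)⁻¹ *ᵥ c ≤ c ⬝ᵥ (augM f M0 a ξ)⁻¹ *ᵥ c) ↔
      ∀ x : X, (f x ⬝ᵥ (augM f M0 a ξs)⁻¹ *ᵥ c) ^ 2 ≤
        c ⬝ᵥ ((augM f M0 a ξs)⁻¹ * infoM f ξs * (augM f M0 a ξs)⁻¹) *ᵥ c := by
  obtain ⟨ha0, ha1⟩ := id ha
  set R := augM f M0 a ξs with hRdef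
  have hR : R.PosDef := augM_posDef f hf hX M0 hM0 ha ξs
  have hNsym : ∀ i j, R⁻¹ i j = R⁻¹ j i := herm_entry hR.1.inv
  constructor
  · -- optimality → pointwise bound
    intro h x
    set F := (Matrix.of fun i j => f x i * f x j : Matrix (Fin p) (Fin p) ℝ) with hF
    set D := F - infoM f ξs with hD
    have key : ∀ t ∈ Set.Ioo (0:ℝ) 1,
        (fun t : ℝ => c ⬝ᵥ ((R + (t*a) • D)⁻¹ * D * (R + (t*a) • D)⁻¹) *ᵥ c) t ≤ 0 := by
      intro t ht
      set ξt := ENNReal.ofReal (1 - t) • ξs + ENNReal.ofReal t • Measure.dirac x with hξt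
      haveI : IsProbabilityMeasure ξt := isProb_mix ht.1.le ht.2.le ξs x
      have hAt_eq : augM f M0 a ξt = R + (t*a) • D :=
        augM_mix f hf hX M0 a ξs x ht.1.le ht.2.le
      have hAt : (R + (t*a) • D).PosDef := hAt_eq ▸ augM_posDef f hf hX M0 hM0 ha ξt
      have h1 := h ξt inferInstance
      rw [hAt_eq] at h1
      have h2 := convex_ineq hR hAt c
      have h3 : R - (R + (t*a) • D) = (-(t*a)) • D := by
        ext i j
        simp only [Matrix.sub_apply, Matrix.add_apply, Matrix.smul_apply, smul_eq_mul]
        ring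
      rw [h3, Matrix.mul_smul, Matrix.smul_mul, smul_mulVec, dotProduct_smul,
        smul_eq_mul] at h2
      have hta : 0 < t * a := mul_pos ht.1 ha0
      simp only []
      nlinarith [h1, h2]
    have hcm : Continuous fun t : ℝ => R + (t*a) • D :=
      continuous_const.add ((continuous_id.mul continuous_const).smul continuous_const)
    have hinv : ContinuousAt (fun t : ℝ => (R + (t*a) • D)⁻¹) 0 := by
      refine ContinuousAt.comp (g := Inv.inv) ?_ hcm.continuousAt
      show ContinuousAt Inv.inv (R + ((0:ℝ)*a) • D)
      have h0 : R + ((0:ℝ)*a) • D = R := by simp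
      rw [h0]
      exact continuousAt_matrix_inv R
        (by rw [Ring.inverse_eq_inv']; exact continuousAt_inv₀ hR.det_pos.ne')
    have hΦ : Continuous fun Nm : Matrix (Fin p) (Fin p) ℝ => c ⬝ᵥ (Nm * D * Nm) *ᵥ c :=
      continuous_const.dotProduct
        (((continuous_id.matrix_mul continuous_const).matrix_mul
          continuous_id).matrix_mulVec continuous_const)
    have hGc : ContinuousAt
        (fun t : ℝ => c ⬝ᵥ ((R + (t*a) • D)⁻¹ * D * (R + (t*a) • D)⁻¹) *ᵥ c) 0 :=
      hΦ.continuousAt.comp hinv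
    haveI hneb : (𝓝[Set.Ioo (0:ℝ) 1] (0:ℝ)).NeBot := by
      refine mem_closure_iff_nhdsWithin_neBot.mp ?_
      rw [closure_Ioo (by norm_num : (0:ℝ) ≠ 1)]
      exact ⟨le_refl 0, zero_le_one⟩
    have hG0 : (fun t : ℝ => c ⬝ᵥ ((R + (t*a) • D)⁻¹ * D * (R + (t*a) • D)⁻¹) *ᵥ c) 0 ≤ 0 :=
      le_of_tendsto (hGc.tendsto.mono_left nhdsWithin_le_nhds)
        (Filter.eventually_of_mem self_mem_nhdsWithin key)
    have h0 : R + ((0:ℝ)*a) • D = R := by simp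
    simp only [h0] at hG0
    have hsub : R⁻¹ * D * R⁻¹ = R⁻¹ * F * R⁻¹ - R⁻¹ * infoM f ξs * R⁻¹ := by
      rw [hD, Matrix.mul_sub, Matrix.sub_mul]
    rw [hsub, sub_mulVec, dotProduct_sub] at hG0
    have hFq : c ⬝ᵥ (R⁻¹ * F * R⁻¹) *ᵥ c = (f x ⬝ᵥ R⁻¹ *ᵥ c) ^ 2 :=
      dot_conj_vecmul hNsym (f x) c
    linarith [hG0, hFq.symm.le, hFq.le]
  · -- pointwise bound → optimality
    intro h ξ hξ
    haveI := hξ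
    have hA : (augM f M0 a ξ).PosDef := augM_posDef f hf hX M0 hM0 ha ξ
    have h2 := convex_ineq hA hR c
    suffices hs : c ⬝ᵥ (R⁻¹ * (augM f M0 a ξ - R) * R⁻¹) *ᵥ c ≤ 0 by linarith
    have hdiff : augM f M0 a ξ - R = a • (infoM f ξ - infoM f ξs) := by
      ext i j
      simp only [augM, hRdef, Matrix.sub_apply, Matrix.add_apply, Matrix.smul_apply,
        smul_eq_mul]
      ring
    rw [hdiff, Matrix.mul_smul, Matrix.smul_mul, smul_mulVec, dotProduct_smul,
      smul_eq_mul, Matrix.mul_sub, Matrix.sub_mul, sub_mulVec, dotProduct_sub]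
    have hKξ : c ⬝ᵥ (R⁻¹ * infoM f ξ * R⁻¹) *ᵥ c
        = ∫ x, (f x ⬝ᵥ R⁻¹ *ᵥ c) ^ 2 ∂ξ := dot_conj_infoM f hf hX ξ hNsym c
    have hint : ∫ x, (f x ⬝ᵥ R⁻¹ *ᵥ c) ^ 2 ∂ξ
        ≤ c ⬝ᵥ (R⁻¹ * infoM f ξs * R⁻¹) *ᵥ c := by
      calc ∫ x, (f x ⬝ᵥ R⁻¹ *ᵥ c) ^ 2 ∂ξ
          ≤ ∫ _x, c ⬝ᵥ (R⁻¹ * infoM f ξs * R⁻¹) *ᵥ c ∂ξ :=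
            integral_mono (integrable_dot_sq f hf hX ξ _) (integrable_const _) h
        _ = c ⬝ᵥ (R⁻¹ * infoM f ξs * R⁻¹) *ᵥ c := by simp
    rw [hKξ]
    nlinarith [hint, ha0]
end

section
/- Fix θ_1 > 0, θ_2 > 0 and x_max > 0, define f : [0, x_max] → ℝ² by f(x) = ( x/(θ_2 + x), −θ_1 x/(θ_2 + x)² )ᵀ, and let c = (0,1)ᵀ. Let b = x_max/θ_2, let x_c = θ_2 b (√2 − 1) / ( 1 + b √2 (√2 − 1) ), and let ξ_c be the probability measure placing mass 1/√2 at x_c and mass 1 − 1/√2 at x_max. Then M(ξ_c) = ∫ f f ᵀ dξ_c is invertible, and for every Borel probability measure ξ on [0, x_max] with M(ξ) = ∫ f fᵀ dξ invertible, cᵀ M(ξ_c)⁻¹ c ≤ cᵀ M(ξ)⁻¹ c; that is, ξ_c is the locally c-optimal design for estimating the Michaelis–Menten constant θ_2. -/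
open Matrix MeasureTheory ENNReal

/-- Gradient of the Michaelis–Menten mean function `η_x(θ) = θ₁ x/(θ₂ + x)` with
respect to `θ = (θ₁, θ₂)`. -/
noncomputable def mmGrad (θ1 θ2 : ℝ) (x : ℝ) : Fin 2 → ℝ :=
  ![x / (θ2 + x), -θ1 * x / (θ2 + x) ^ 2]

/-- Information matrix `M(ξ) = ∫ f(x) f(x)ᵀ dξ(x)` of a design `ξ` on `[0, xmax]`
for the Michaelis–Menten model. -/
noncomputable def mmInfo (θ1 θ2 : ℝ) (ξ : Measure ℝ) : Matrix (Fin 2) (Fin 2) ℝ :=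
  Matrix.of fun i j => ∫ x, mmGrad θ1 θ2 x i * mmGrad θ1 θ2 x j ∂ξ

lemma mm_integrable_dirac {f : ℝ → ℝ} (hf : Measurable f) (a : ℝ) :
    Integrable f (Measure.dirac a) :=
  ⟨hf.aestronglyMeasurable, by simp [HasFiniteIntegral, lintegral_dirac]⟩

lemma mm_meas (θ1 θ2 : ℝ) (i : Fin 2) : Measurable (fun x => mmGrad θ1 θ2 x i) := by
  fin_cases i
  · simp only [mmGrad, Matrix.cons_val_zero]
    exact measurable_id.div (measurable_const.add measurable_id)
  · simp only [mmGrad, Matrix.cons_val_one, Matrix.head_cons]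
    exact (measurable_const.mul measurable_id).div ((measurable_const.add measurable_id).pow_const 2)

lemma mm_two_point (f : ℝ → ℝ) (hf : Measurable f) (a c : ℝ) (w1 w2 : ℝ)
    (h1 : 0 ≤ w1) (h2 : 0 ≤ w2) :
    ∫ x, f x ∂(ENNReal.ofReal w1 • Measure.dirac a + ENNReal.ofReal w2 • Measure.dirac c)
      = w1 * f a + w2 * f c := by
  rw [integral_add_measure ((mm_integrable_dirac hf a).smul_measure ofReal_ne_top)
    ((mm_integrable_dirac hf c).smul_measure ofReal_ne_top),
    integral_smul_measure, integral_smul_measure, integral_dirac, integral_dirac,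
    ENNReal.toReal_ofReal h1, ENNReal.toReal_ofReal h2]
  simp [smul_eq_mul]

lemma mm_dot (A : Matrix (Fin 2) (Fin 2) ℝ) :
    ![(0:ℝ), 1] ⬝ᵥ A *ᵥ ![0, 1] = A 1 1 := by
  simp [Matrix.mulVec, dotProduct, Fin.sum_univ_two]

lemma mm_inv11 (a b c d : ℝ) (h : (!![a, b; c, d] : Matrix (Fin 2) (Fin 2) ℝ).det ≠ 0) :
    (!![a, b; c, d] : Matrix (Fin 2) (Fin 2) ℝ)⁻¹ 1 1 = a / (a * d - b * c) := by
  rw [Matrix.inv_def, Matrix.adjugate_fin_two]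
  rw [Matrix.det_fin_two_of] at h ⊢
  simp only [Matrix.smul_apply, Matrix.cons_val', Matrix.cons_val_one, Matrix.head_cons,
    Matrix.head_fin_const, Matrix.cons_val_fin_one, Matrix.empty_val', Matrix.cons_val_zero,
    smul_eq_mul, Ring.inverse_eq_inv']
  rw [eq_div_iff h]
  field_simp
  simp

set_option maxHeartbeats 1600000 in
/-- The design placing mass `1/√2` at `x_c = θ₂ b (√2−1)/(1 + b√2(√2−1))` (with
`b = xmax/θ₂`) and mass `1 − 1/√2` at `xmax` is the locally c-optimal design for the
Michaelis–Menten constant `θ₂`: its information matrix is invertible and it minimizes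
`cᵀ M(ξ)⁻¹ c`, `c = (0,1)ᵀ`, over all designs with invertible information matrix. -/
theorem stmt15 (θ1 θ2 xmax : ℝ) (hθ1 : 0 < θ1) (hθ2 : 0 < θ2) (hx : 0 < xmax)
    (b : ℝ) (hb : b = xmax / θ2)
    (xc : ℝ) (hxc : xc = θ2 * b * (Real.sqrt 2 - 1) / (1 + b * Real.sqrt 2 * (Real.sqrt 2 - 1)))
    (ξc : Measure ℝ)
    (hξc : ξc = ENNReal.ofReal (1 / Real.sqrt 2) • Measure.dirac xc +
      ENNReal.ofReal (1 - 1 / Real.sqrt 2) • Measure.dirac xmax) :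
    IsUnit (mmInfo θ1 θ2 ξc).det ∧
      ∀ ξ : Measure ℝ, IsProbabilityMeasure ξ → ξ (Set.Icc 0 xmax)ᶜ = 0 →
        IsUnit (mmInfo θ1 θ2 ξ).det →
          ![0, 1] ⬝ᵥ (mmInfo θ1 θ2 ξc)⁻¹ *ᵥ ![0, 1] ≤
            ![0, 1] ⬝ᵥ (mmInfo θ1 θ2 ξ)⁻¹ *ᵥ ![0, 1] := by
  set q := Real.sqrt 2 with hqdef
  have hq2 : q ^ 2 = 2 := Real.sq_sqrt (by norm_num)
  have hqnn : 0 ≤ q := Real.sqrt_nonneg 2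
  have hq1 : 1 < q := by nlinarith
  have hq0 : 0 < q := by linarith
  have hqlt2 : q < 2 := by nlinarith
  set w1 : ℝ := 1 / q with hw1def
  set w2 : ℝ := 1 - 1 / q with hw2def
  have hw1 : 0 < w1 := by positivity
  have hw2 : 0 < w2 := by
    rw [hw2def]
    have : 1 / q < 1 := by rw [div_lt_one hq0]; exact hq1
    linarith
  have hsden : 0 < θ2 + xmax := by linarith
  set s : ℝ := xmax / (θ2 + xmax) with hsdef
  have hs : 0 < s := by positivity
  have hs1 : s < 1 := by rw [hsdef, div_lt_one hsden]; linarith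
  set t1 : ℝ := (q - 1) * s with ht1def
  have ht1 : 0 < t1 := by
    rw [ht1def]; exact mul_pos (by linarith) hs
  have hbpos : 0 < b := by rw [hb]; positivity
  have hDc : 0 < 1 + b * q * (q - 1) := by nlinarith
  have hxc0 : 0 < xc := by
    rw [hxc]
    exact div_pos (mul_pos (mul_pos hθ2 hbpos) (by linarith)) hDc
  have hxcden : 0 < θ2 + xc := by linarith
  -- key fraction identity
  have hfrac : xc / (θ2 + xc) = t1 := by
    rw [ht1def, hsdef, div_eq_iff hxcden.ne', hxc, hb]
    have h1 : (1 + xmax / θ2 * q * (q - 1)) ≠ 0 := by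
      rw [hb] at hDc; exact ne_of_gt hDc
    have h2 : (θ2:ℝ) ≠ 0 := hθ2.ne'
    have h3 : (θ2 + xmax) ≠ 0 := by positivity
    have hprod : 0 < xmax * q * (q - 1) := mul_pos (mul_pos hx hq0) (by linarith)
    have h4 : (-(xmax * q) + xmax * q ^ 2 + θ2) ≠ 0 := by nlinarith
    field_simp
    linear_combination (-(xmax ^ 2 * θ2 ^ 2 * (q - 1)) - xmax ^ 3 * θ2 * q * (q ^ 2 - 2 * q + 1) + (q ^ 3 * θ2 * xmax ^ 3 - 2 * q ^ 2 * θ2 * xmax ^ 3 + q * θ2 ^ 2 * xmax ^ 2 + q * θ2 * xmax ^ 3 - q * xmax - θ2 ^ 2 * xmax ^ 2 + xmax)) * hq2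
  -- notation for the gradient
  set g : ℝ → Fin 2 → ℝ := fun x => mmGrad θ1 θ2 x with hgdef
  have hg0 : ∀ x, g x 0 = x / (θ2 + x) := fun x => rfl
  have hg1 : ∀ x, g x 1 = -θ1 * x / (θ2 + x) ^ 2 := fun x => rfl
  have htrans : ∀ x : ℝ, θ2 + x ≠ 0 →
      -θ1 * x / (θ2 + x) ^ 2 = -(θ1 / θ2) * ((x / (θ2 + x)) * (1 - x / (θ2 + x))) := by
    intro x hxne
    field_simp
    ring
  have hgc0 : g xc 0 = t1 := by rw [hg0, hfrac]
  have hgc1 : g xc 1 = -(θ1 / θ2) * (t1 * (1 - t1)) := by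
    rw [hg1, htrans xc (ne_of_gt hxcden), hfrac]
  have hgm0 : g xmax 0 = s := by rw [hg0, hsdef]
  have hgm1 : g xmax 1 = -(θ1 / θ2) * (s * (1 - s)) := by
    rw [hg1, htrans xmax (ne_of_gt hsden), ← hsdef]
  -- entries of the information matrix of ξc
  have hMc : ∀ i j, mmInfo θ1 θ2 ξc i j
      = w1 * (g xc i * g xc j) + w2 * (g xmax i * g xmax j) := by
    intro i j
    simp only [mmInfo, Matrix.of_apply]
    rw [hξc]
    exact mm_two_point _ ((mm_meas θ1 θ2 i).mul (mm_meas θ1 θ2 j)) xc xmax w1 w2 hw1.le hw2.le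
  have hM00 : mmInfo θ1 θ2 ξc 0 0 = w1 * t1 ^ 2 + w2 * s ^ 2 := by
    rw [hMc 0 0, hgc0, hgm0]; ring
  have hM01 : mmInfo θ1 θ2 ξc 0 1
      = -(θ1 / θ2) * (w1 * t1 ^ 2 * (1 - t1) + w2 * s ^ 2 * (1 - s)) := by
    rw [hMc 0 1, hgc0, hgc1, hgm0, hgm1]; ring
  have hM10 : mmInfo θ1 θ2 ξc 1 0
      = -(θ1 / θ2) * (w1 * t1 ^ 2 * (1 - t1) + w2 * s ^ 2 * (1 - s)) := by
    rw [hMc 1 0, hgc0, hgc1, hgm0, hgm1]; ring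
  have hM11 : mmInfo θ1 θ2 ξc 1 1
      = (θ1 / θ2) ^ 2 * (w1 * t1 ^ 2 * (1 - t1) ^ 2 + w2 * s ^ 2 * (1 - s) ^ 2) := by
    rw [hMc 1 1, hgc1, hgm1]; ring
  -- the key algebraic identity
  have key : (w1 * t1 ^ 2 + w2 * s ^ 2) * t1 ^ 2 = w1 * w2 * s ^ 2 * (t1 - s) ^ 2 := by
    rw [hw1def, hw2def, ht1def]
    have hq0' : q ≠ 0 := ne_of_gt hq0
    field_simp
    linear_combination (s^4*(q-1)*(q^2-2*q+2) + s^4*(q^4-4*q^3+7*q^2-6*q+2) + (-q^4*s^4 + 3*q^3*s^4 + q^3 - 4*q^2*s^4 - 3*q^2 + 2*q*s^4 + 4*q - 2)) * hq2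
  have hdet : (mmInfo θ1 θ2 ξc).det
      = (θ1 / θ2) ^ 2 * (w1 * w2 * t1 ^ 2 * s ^ 2 * (t1 - s) ^ 2) := by
    rw [Matrix.det_fin_two, hM00, hM01, hM10, hM11]; ring
  have hts : t1 - s ≠ 0 := by
    rw [ht1def]
    have : (q - 1) * s - s = (q - 2) * s := by ring
    rw [this]
    exact mul_ne_zero (by linarith) (ne_of_gt hs)
  have hdetpos : 0 < (mmInfo θ1 θ2 ξc).det := by
    rw [hdet]
    have h1 : 0 < (t1 - s) ^ 2 := by positivity
    positivity
  have hdetne : (mmInfo θ1 θ2 ξc).det ≠ 0 := ne_of_gt hdetpos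
  have part1 : IsUnit (mmInfo θ1 θ2 ξc).det := isUnit_iff_ne_zero.mpr hdetne
  -- value of the criterion at ξc
  have hM00pos : 0 < w1 * t1 ^ 2 + w2 * s ^ 2 := by positivity
  have hdetval : (mmInfo θ1 θ2 ξc).det
      = (θ1 / θ2) ^ 2 * t1 ^ 2 * ((w1 * t1 ^ 2 + w2 * s ^ 2) * t1 ^ 2) := by
    rw [hdet, key]; ring
  have hMceq : mmInfo θ1 θ2 ξc
      = !![w1 * t1 ^ 2 + w2 * s ^ 2, -(θ1 / θ2) * (w1 * t1 ^ 2 * (1 - t1) + w2 * s ^ 2 * (1 - s));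
          -(θ1 / θ2) * (w1 * t1 ^ 2 * (1 - t1) + w2 * s ^ 2 * (1 - s)),
          (θ1 / θ2) ^ 2 * (w1 * t1 ^ 2 * (1 - t1) ^ 2 + w2 * s ^ 2 * (1 - s) ^ 2)] := by
    ext i j
    fin_cases i <;> fin_cases j
    · simpa using hM00
    · simpa using hM01
    · simpa using hM10
    · simpa using hM11
  have hdetne' : (!![w1 * t1 ^ 2 + w2 * s ^ 2,
      -(θ1 / θ2) * (w1 * t1 ^ 2 * (1 - t1) + w2 * s ^ 2 * (1 - s));
      -(θ1 / θ2) * (w1 * t1 ^ 2 * (1 - t1) + w2 * s ^ 2 * (1 - s)),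
      (θ1 / θ2) ^ 2 * (w1 * t1 ^ 2 * (1 - t1) ^ 2 + w2 * s ^ 2 * (1 - s) ^ 2)]
      : Matrix (Fin 2) (Fin 2) ℝ).det ≠ 0 := by
    rw [← hMceq]; exact hdetne
  have hVal : ![(0:ℝ), 1] ⬝ᵥ (mmInfo θ1 θ2 ξc)⁻¹ *ᵥ ![0, 1] = (θ2 / (θ1 * t1 ^ 2)) ^ 2 := by
    rw [mm_dot, hMceq, mm_inv11 _ _ _ _ hdetne']
    have hdenval : (w1 * t1 ^ 2 + w2 * s ^ 2) *
          ((θ1 / θ2) ^ 2 * (w1 * t1 ^ 2 * (1 - t1) ^ 2 + w2 * s ^ 2 * (1 - s) ^ 2)) -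
        -(θ1 / θ2) * (w1 * t1 ^ 2 * (1 - t1) + w2 * s ^ 2 * (1 - s)) *
          (-(θ1 / θ2) * (w1 * t1 ^ 2 * (1 - t1) + w2 * s ^ 2 * (1 - s)))
        = (θ1 / θ2) ^ 2 * t1 ^ 2 * ((w1 * t1 ^ 2 + w2 * s ^ 2) * t1 ^ 2) := by
      have expand : (w1 * t1 ^ 2 + w2 * s ^ 2) *
          ((θ1 / θ2) ^ 2 * (w1 * t1 ^ 2 * (1 - t1) ^ 2 + w2 * s ^ 2 * (1 - s) ^ 2)) -
        -(θ1 / θ2) * (w1 * t1 ^ 2 * (1 - t1) + w2 * s ^ 2 * (1 - s)) *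
          (-(θ1 / θ2) * (w1 * t1 ^ 2 * (1 - t1) + w2 * s ^ 2 * (1 - s)))
          = (θ1 / θ2) ^ 2 * t1 ^ 2 * (w1 * w2 * s ^ 2 * (t1 - s) ^ 2) := by ring
      rw [expand, ← key]
    rw [hdenval]
    have hne1 : (θ1 / θ2) ^ 2 * t1 ^ 2 * ((w1 * t1 ^ 2 + w2 * s ^ 2) * t1 ^ 2) ≠ 0 := by positivity
    rw [div_eq_iff hne1]
    field_simp
  refine ⟨part1, ?_⟩
  intro ξ hprob hsupp hunit
  clear hξc hxc hb hMc hM00 hM01 hM10 hM11 key hdet hdetne hdetpos hdetval hMceq hdetne'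
  clear hts hM00pos hfrac htrans hgc0 hgc1 hgm0 hgm1 hxc0 hxcden hbpos hDc part1
  clear hw1 hw2 hw1def hw2def
  clear xc b w1 w2
  clear_value q s t1
  have hMdet : (mmInfo θ1 θ2 ξ).det ≠ 0 := hunit.ne_zero
  set M := mmInfo θ1 θ2 ξ with hMdef
  have hMij : ∀ i j, M i j = ∫ x, g x i * g x j ∂ξ := by
    intro i j; rw [hgdef, hMdef]; simp only [mmInfo, Matrix.of_apply]
  -- a.e. membership in the design interval
  have hae : ∀ᵐ x ∂ξ, x ∈ Set.Icc 0 xmax := by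
    rw [MeasureTheory.ae_iff]
    convert hsupp using 2
    rfl
  have hbound : ∀ i, ∀ x ∈ Set.Icc (0:ℝ) xmax, |g x i| ≤ 1 + θ1 / θ2 := by
    intro i x hxmem
    obtain ⟨hx0, hx1⟩ := hxmem
    have hdx : 0 < θ2 + x := by linarith
    have hr : 0 ≤ θ1 / θ2 := by positivity
    fin_cases i
    · show |g x 0| ≤ 1 + θ1 / θ2
      rw [hg0, abs_of_nonneg (div_nonneg hx0 hdx.le)]
      have : x / (θ2 + x) ≤ 1 := by rw [div_le_one hdx]; linarith
      linarith
    · show |g x 1| ≤ 1 + θ1 / θ2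
      rw [hg1]
      have he : -θ1 * x / (θ2 + x) ^ 2 = -(θ1 * x / (θ2 + x) ^ 2) := by ring
      rw [he, abs_neg, abs_of_nonneg (by positivity)]
      have h2 : θ1 * x / (θ2 + x) ^ 2 ≤ θ1 / θ2 := by
        rw [div_le_div_iff₀ (by positivity) hθ2]
        nlinarith [mul_nonneg hθ1.le (sq_nonneg θ2), mul_nonneg hθ1.le (sq_nonneg x),
          mul_nonneg (mul_nonneg hθ1.le hθ2.le) hx0]
      linarith
  -- integrability of the products
  have hint : ∀ i j, Integrable (fun x => g x i * g x j) ξ := by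
    intro i j
    refine Integrable.mono' (integrable_const ((1 + θ1 / θ2) ^ 2)) ?_ ?_
    · exact ((mm_meas θ1 θ2 i).mul (mm_meas θ1 θ2 j)).aestronglyMeasurable
    · filter_upwards [hae] with x hxm
      have h1 := hbound i x hxm
      have h2 := hbound j x hxm
      have h3 : (0:ℝ) ≤ |g x i| := abs_nonneg _
      have h4 : (0:ℝ) ≤ |g x j| := abs_nonneg _
      calc ‖g x i * g x j‖ = |g x i| * |g x j| := abs_mul _ _
        _ ≤ (1 + θ1 / θ2) * (1 + θ1 / θ2) := mul_le_mul h1 h2 h4 (by linarith)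
        _ = (1 + θ1 / θ2) ^ 2 := by ring
  -- quadratic-form representation
  have hrep : ∀ v : Fin 2 → ℝ,
      v ⬝ᵥ M *ᵥ v = ∫ x, (v 0 * g x 0 + v 1 * g x 1) ^ 2 ∂ξ := by
    intro v
    have IA : Integrable (fun x => v 0 * v 0 * (g x 0 * g x 0)) ξ := (hint 0 0).const_mul _
    have IB : Integrable (fun x => v 0 * v 1 * (g x 0 * g x 1)) ξ := (hint 0 1).const_mul _
    have IC : Integrable (fun x => v 1 * v 0 * (g x 1 * g x 0)) ξ := (hint 1 0).const_mul _
    have ID : Integrable (fun x => v 1 * v 1 * (g x 1 * g x 1)) ξ := (hint 1 1).const_mul _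
    have Etot : ∫ x, (v 0 * g x 0 + v 1 * g x 1) ^ 2 ∂ξ
        = (∫ x, v 0 * v 0 * (g x 0 * g x 0) ∂ξ) + ((∫ x, v 0 * v 1 * (g x 0 * g x 1) ∂ξ)
          + ((∫ x, v 1 * v 0 * (g x 1 * g x 0) ∂ξ) + ∫ x, v 1 * v 1 * (g x 1 * g x 1) ∂ξ)) := by
      calc ∫ x, (v 0 * g x 0 + v 1 * g x 1) ^ 2 ∂ξ
          = ∫ x, (v 0 * v 0 * (g x 0 * g x 0) + (v 0 * v 1 * (g x 0 * g x 1)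
              + (v 1 * v 0 * (g x 1 * g x 0) + v 1 * v 1 * (g x 1 * g x 1)))) ∂ξ := by
            congr 1; funext x; ring
        _ = (∫ x, v 0 * v 0 * (g x 0 * g x 0) ∂ξ) + ∫ x, (v 0 * v 1 * (g x 0 * g x 1)
              + (v 1 * v 0 * (g x 1 * g x 0) + v 1 * v 1 * (g x 1 * g x 1))) ∂ξ :=
            integral_add IA (IB.add (IC.add ID))
        _ = (∫ x, v 0 * v 0 * (g x 0 * g x 0) ∂ξ) + ((∫ x, v 0 * v 1 * (g x 0 * g x 1) ∂ξ)
              + ∫ x, (v 1 * v 0 * (g x 1 * g x 0) + v 1 * v 1 * (g x 1 * g x 1)) ∂ξ) :=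
            congrArg (fun z => (∫ x, v 0 * v 0 * (g x 0 * g x 0) ∂ξ) + z)
              (integral_add IB (IC.add ID))
        _ = (∫ x, v 0 * v 0 * (g x 0 * g x 0) ∂ξ) + ((∫ x, v 0 * v 1 * (g x 0 * g x 1) ∂ξ)
              + ((∫ x, v 1 * v 0 * (g x 1 * g x 0) ∂ξ) + ∫ x, v 1 * v 1 * (g x 1 * g x 1) ∂ξ)) :=
            congrArg (fun z => (∫ x, v 0 * v 0 * (g x 0 * g x 0) ∂ξ)
              + ((∫ x, v 0 * v 1 * (g x 0 * g x 1) ∂ξ) + z)) (integral_add IC ID)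
    have e00 : v 0 * v 0 * (M 0 0) = ∫ x, v 0 * v 0 * (g x 0 * g x 0) ∂ξ := by
      rw [hMij 0 0, integral_const_mul]
    have e01 : v 0 * v 1 * (M 0 1) = ∫ x, v 0 * v 1 * (g x 0 * g x 1) ∂ξ := by
      rw [hMij 0 1, integral_const_mul]
    have e10 : v 1 * v 0 * (M 1 0) = ∫ x, v 1 * v 0 * (g x 1 * g x 0) ∂ξ := by
      rw [hMij 1 0, integral_const_mul]
    have e11 : v 1 * v 1 * (M 1 1) = ∫ x, v 1 * v 1 * (g x 1 * g x 1) ∂ξ := by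
      rw [hMij 1 1, integral_const_mul]
    have eL : v ⬝ᵥ M *ᵥ v = v 0 * v 0 * (M 0 0) + (v 0 * v 1 * (M 0 1)
        + (v 1 * v 0 * (M 1 0) + v 1 * v 1 * (M 1 1))) := by
      simp only [Matrix.mulVec, dotProduct, Fin.sum_univ_two]
      ring
    rw [eL, e00, e01, e10, e11]
    exact Etot.symm
  have hpsd : ∀ v : Fin 2 → ℝ, 0 ≤ v ⬝ᵥ M *ᵥ v := by
    intro v
    rw [hrep v]
    exact integral_nonneg fun x => sq_nonneg _
  -- the certificate vector
  set δ : ℝ := θ2 / (θ1 * t1 ^ 2) with hδdef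
  set d : Fin 2 → ℝ := ![(1 - 2 * t1) / t1 ^ 2, δ] with hddef
  have hδpos : 0 < δ := by rw [hδdef]; positivity
  have hd0 : d 0 = (1 - 2 * t1) / t1 ^ 2 := rfl
  have hd1v : d 1 = δ := rfl
  -- pointwise bound on the sensitivity function
  have hψbd : ∀ᵐ x ∂ξ, (d 0 * g x 0 + d 1 * g x 1) ^ 2 ≤ 1 := by
    filter_upwards [hae] with x hxm
    obtain ⟨hx0, hx1⟩ := hxm
    have hdx : 0 < θ2 + x := by linarith
    set t : ℝ := x / (θ2 + x) with htdef
    have ht0 : 0 ≤ t := div_nonneg hx0 hdx.le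
    have hts' : t ≤ s := by
      rw [htdef, hsdef, div_le_div_iff₀ hdx hsden]
      nlinarith
    have hexp : d 0 * g x 0 + d 1 * g x 1 = (t / t1) ^ 2 - 2 * (t / t1) := by
      rw [hd0, hd1v, hδdef, hg0, hg1, htdef]
      field_simp
      ring
    rw [hexp]
    set u : ℝ := t / t1 with hudef
    have hu0 : 0 ≤ u := div_nonneg ht0 ht1.le
    have huB : u ≤ q + 1 := by
      rw [hudef, div_le_iff₀ ht1, ht1def]
      nlinarith
    have hw2' : (u - 1) ^ 2 ≤ 2 := by nlinarith [mul_nonneg (by linarith : (0:ℝ) ≤ q - u + 1) (by linarith : (0:ℝ) ≤ q + u - 1)]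
    nlinarith [sq_nonneg (u - 1)]
  -- d M d ≤ 1
  have hψint : Integrable (fun x => (d 0 * g x 0 + d 1 * g x 1) ^ 2) ξ := by
    have hfe : (fun x => (d 0 * g x 0 + d 1 * g x 1) ^ 2)
        = fun x => d 0 * d 0 * (g x 0 * g x 0) + (d 0 * d 1 * (g x 0 * g x 1)
            + (d 1 * d 0 * (g x 1 * g x 0) + d 1 * d 1 * (g x 1 * g x 1))) := by
      funext x; ring
    rw [hfe]
    exact ((hint 0 0).const_mul _).add (((hint 0 1).const_mul _).add
      (((hint 1 0).const_mul _).add ((hint 1 1).const_mul _)))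
  have hdMd : d ⬝ᵥ M *ᵥ d ≤ 1 := by
    rw [hrep d]
    calc (∫ x, (d 0 * g x 0 + d 1 * g x 1) ^ 2 ∂ξ) ≤ ∫ _x, (1:ℝ) ∂ξ :=
          integral_mono_ae hψint (integrable_const 1) hψbd
      _ = 1 := by simp [hprob.measure_univ]
  -- Cauchy–Schwarz / equivalence-theorem step
  obtain ⟨uvec, huvdef⟩ : ∃ u : Fin 2 → ℝ, u = M⁻¹ *ᵥ ![0, 1] := ⟨_, rfl⟩
  obtain ⟨γ, hγdef⟩ : ∃ r : ℝ, r = ![(0:ℝ), 1] ⬝ᵥ uvec := ⟨_, rfl⟩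
  have hMA : M * M⁻¹ = 1 := Matrix.mul_nonsing_inv _ (isUnit_iff_ne_zero.mpr hMdet)
  have hMu : M *ᵥ uvec = ![0, 1] := by
    rw [huvdef, Matrix.mulVec_mulVec, hMA, Matrix.one_mulVec]
  have hsym : Mᵀ = M := by
    ext i j
    rw [Matrix.transpose_apply, hMij i j, hMij j i]
    simp [mul_comm]
  have hdMu : d ⬝ᵥ M *ᵥ uvec = δ := by
    rw [hMu]
    simp [dotProduct, Fin.sum_univ_two, hd1v]
  have huMd : uvec ⬝ᵥ M *ᵥ d = δ := by
    rw [Matrix.dotProduct_mulVec, ← hsym, Matrix.vecMul_transpose, dotProduct_comm]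
    exact hdMu
  have huMu : uvec ⬝ᵥ M *ᵥ uvec = γ := by
    rw [hMu, dotProduct_comm, ← hγdef]
  have hquad : ∀ l : ℝ, 0 ≤ d ⬝ᵥ M *ᵥ d - 2 * l * δ + l ^ 2 * γ := by
    intro l
    have h0 := hpsd (d - l • uvec)
    have hexp : (d - l • uvec) ⬝ᵥ M *ᵥ (d - l • uvec)
        = d ⬝ᵥ M *ᵥ d - 2 * l * δ + l ^ 2 * γ := by
      simp only [sub_dotProduct, dotProduct_sub, Matrix.mulVec_sub,
        Matrix.mulVec_smul, smul_dotProduct, dotProduct_smul, smul_eq_mul]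
      rw [hdMu, huMd, huMu]
      ring
    rw [hexp] at h0
    exact h0
  have hdMd0 : 0 ≤ d ⬝ᵥ M *ᵥ d := hpsd d
  have hγpos : 0 < γ := by
    by_contra hcon
    push_neg at hcon
    have hl := hquad ((d ⬝ᵥ M *ᵥ d + 1) / (2 * δ))
    have he : 2 * ((d ⬝ᵥ M *ᵥ d + 1) / (2 * δ)) * δ = d ⬝ᵥ M *ᵥ d + 1 := by
      field_simp
    have hln : ((d ⬝ᵥ M *ᵥ d + 1) / (2 * δ)) ^ 2 * γ ≤ 0 :=
      mul_nonpos_of_nonneg_of_nonpos (sq_nonneg _) hcon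
    linarith
  have hfin : δ ^ 2 ≤ γ := by
    have hl := hquad (δ / γ)
    have he : 2 * (δ / γ) * δ - (δ / γ) ^ 2 * γ = δ ^ 2 / γ := by
      field_simp
      ring
    have hdiv : δ ^ 2 / γ ≤ d ⬝ᵥ M *ᵥ d := by linarith
    have : δ ^ 2 / γ ≤ 1 := le_trans hdiv hdMd
    calc δ ^ 2 = δ ^ 2 / γ * γ := by field_simp
      _ ≤ 1 * γ := mul_le_mul_of_nonneg_right this hγpos.le
      _ = γ := one_mul γ
  rw [hVal]
  calc (θ2 / (θ1 * t1 ^ 2)) ^ 2 = δ ^ 2 := by rw [hδdef]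
    _ ≤ γ := hfin
    _ = ![(0:ℝ), 1] ⬝ᵥ M⁻¹ *ᵥ ![0, 1] := by rw [hγdef, huvdef]
end
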